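/- Let x_t ∈ X = {x ∈ [0,1]^N : Σᵢ xᵢ = k}, let y = x_t + ηg where g has nonnegative coordinates, and let x_{t+1} = Π_X(y) be the Euclidean projection onto X. Then for every coordinate i with g_i = 0, x_{t+1,i} ≤ x_{t,i}. -/

import Mathlib

/-- Coordinates with zero gradient never increase under the Euclidean projection step
of OGD onto the capped simplex: with `y = x + ηg`, `g ≥ 0`, and `x_{t+1} = Π_X(y)`,
`g_i = 0 → x_{t+1,i} ≤ x_i`. -/
theorem stmt17 (N k : ℕ) (hk : 1 ≤ k) (hkN : k ≤ N)
    (x y xnext g : Fin N → ℝ) (η : ℝ) (hη : 0 ≤ η) (hg : ∀ i, 0 ≤ g i)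
    (hxX : (∀ i, x i ∈ Set.Icc (0 : ℝ) 1) ∧ ∑ i, x i = k)
    (hy : ∀ i, y i = x i + η * g i)
    (hxnext : (∀ i, xnext i ∈ Set.Icc (0 : ℝ) 1) ∧ ∑ i, xnext i = k)
    (hproj : IsMinOn (fun z : Fin N → ℝ => ∑ i, (z i - y i) ^ 2)
      {z : Fin N → ℝ | (∀ i, z i ∈ Set.Icc (0 : ℝ) 1) ∧ ∑ i, z i = k} xnext) :
    ∀ i, g i = 0 → xnext i ≤ x i := by
  intro i hgi
  by_contra hlt
  push_neg at hlt
  -- there is j with xnext j < x j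
  obtain ⟨j, hj⟩ : ∃ j, xnext j < x j := by
    by_contra h
    push_neg at h
    have : (∑ m, x m) < ∑ m, xnext m :=
      Finset.sum_lt_sum (fun m _ => h m) ⟨i, Finset.mem_univ i, hlt⟩
    rw [hxX.2, hxnext.2] at this
    exact lt_irrefl _ this
  have hij : i ≠ j := by
    intro h; subst h; exact absurd (hxX.1 i).1 (by linarith [(hxX.1 i).1])
  set A : ℝ := xnext i - y i with hA
  set B : ℝ := xnext j - y j with hB
  have hAy : y i = x i := by rw [hy i, hgi]; ring
  have hApos : 0 < A := by rw [hA, hAy]; linarith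
  have hBneg : B < 0 := by
    have := hy j
    have hgj := hg j
    have : y j ≥ x j := by rw [hy j]; nlinarith
    rw [hB]; linarith
  set ε : ℝ := min ((A - B) / 2) (min (xnext i) (1 - xnext j)) with hε
  have hxi0 : 0 < xnext i := lt_of_le_of_lt (hxX.1 i).1 hlt
  have hxj1 : 1 - xnext j > 0 := by linarith [(hxX.1 j).2]
  have hεpos : 0 < ε := by
    apply lt_min (by linarith) (lt_min hxi0 hxj1)
  have hε1 : ε ≤ (A - B) / 2 := min_le_left _ _
  have hε2 : ε ≤ xnext i := le_trans (min_le_right _ _) (min_le_left _ _)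
  have hε3 : ε ≤ 1 - xnext j := le_trans (min_le_right _ _) (min_le_right _ _)
  -- perturbed point
  set d : Fin N → ℝ := fun m => (if m = j then (1:ℝ) else 0) - (if m = i then 1 else 0)
    with hd
  set z : Fin N → ℝ := fun m => xnext m + ε * d m with hz
  have hzmem : z ∈ {z : Fin N → ℝ | (∀ m, z m ∈ Set.Icc (0 : ℝ) 1) ∧ ∑ m, z m = k} := by
    constructor
    · intro m
      rw [Set.mem_Icc]
      by_cases hmi : m = i
      · subst hmi
        have hji : ¬ (m = j) := hij
        have hzm : z m = xnext m - ε := by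
          simp only [hz, hd, if_neg hji, if_pos rfl, if_true]; ring
        rw [hzm]
        exact ⟨by linarith, by linarith [(hxnext.1 m).2]⟩
      · by_cases hmj : m = j
        · subst hmj
          have hzm : z m = xnext m + ε := by
            simp only [hz, hd, if_pos rfl, if_neg hmi, if_true]; ring
          rw [hzm]
          exact ⟨by linarith [(hxnext.1 m).1], by linarith⟩
        · simp only [hz, hd, if_neg hmi, if_neg hmj]
          have h := hxnext.1 m
          rw [Set.mem_Icc] at h
          constructor <;> [linarith; linarith]
    · have : ∑ m, z m = (∑ m, xnext m) + ε * ((∑ m, d m)) := by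
        simp [hz, Finset.sum_add_distrib, Finset.mul_sum]
      rw [this]
      have hsd : ∑ m, d m = 0 := by
        simp [hd, Finset.sum_sub_distrib, Finset.sum_ite_eq']
      rw [hsd, hxnext.2]; ring
  have hmin := hproj hzmem
  -- compute the objective at z
  have hexp : ∀ m, (z m - y m) ^ 2 = (xnext m - y m) ^ 2
      + 2 * ε * ((xnext m - y m) * d m)
      + ε ^ 2 * ((if m = j then (1:ℝ) else 0) + (if m = i then 1 else 0)) := by
    intro m
    have hdsq : (d m) ^ 2 = (if m = j then (1:ℝ) else 0) + (if m = i then 1 else 0) := by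
      by_cases hmi : m = i
      · subst hmi; simp [hd, if_neg hij]
      · by_cases hmj : m = j
        · subst hmj; simp [hd, hmi]
        · simp [hd, hmi, hmj]
      -- done
    have : z m - y m = (xnext m - y m) + ε * d m := by simp only [hz]; ring
    rw [this, ← hdsq]; ring
  have hsum : ∑ m, (z m - y m) ^ 2 = (∑ m, (xnext m - y m) ^ 2)
      + 2 * ε * (B - A) + 2 * ε ^ 2 := by
    rw [Finset.sum_congr rfl (fun m _ => hexp m)]
    rw [Finset.sum_add_distrib, Finset.sum_add_distrib]
    have h1 : ∑ m, 2 * ε * ((xnext m - y m) * d m) = 2 * ε * (B - A) := by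
      rw [← Finset.mul_sum]
      congr 1
      simp only [hd, mul_sub, mul_ite, mul_one, mul_zero, Finset.sum_sub_distrib,
        Finset.sum_ite_eq', Finset.mem_univ, if_true]
      rw [hA, hB]
    have h2 : ∑ m, ε ^ 2 * ((if m = j then (1:ℝ) else 0) + (if m = i then 1 else 0))
        = 2 * ε ^ 2 := by
      rw [← Finset.mul_sum, Finset.sum_add_distrib]
      simp only [Finset.sum_ite_eq', Finset.mem_univ, if_true]
      ring
    rw [h1, h2]
  simp only [Set.mem_setOf_eq] at hmin
  rw [hsum] at hmin
  have : 2 * ε * (B - A) + 2 * ε ^ 2 < 0 := by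
    nlinarith [mul_le_mul_of_nonneg_left hε1 hεpos.le, mul_pos hεpos (by linarith : (0:ℝ) < A - B)]
  linarith
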